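/- Vertex marginals are Fourier pairs (Proposition 2): fix a vertex v₀ ∈ V, and suppose Z_p ≠ 0, φ_{v₀}(a) ≠ 0 for all a, and φ̃_{v₀}(a) ≠ 0 for all a. Define the primal vertex marginal π_p(a) = (Σ_{x : x(v₀) = a} Π_{e∈E} ψ_e(y_e(x)) Π_{v∈V} φ_v(x(v)))/Z_p and the dual vertex marginal π_d(a) = (Σ_{ỹ : x̃_{v₀}(ỹ) = a} Π_{e∈E} ψ̃_e(ỹ(e)) Π_{v∈V} φ̃_v(x̃_v(ỹ)))/Z_d. Then for every a ∈ ZMod q: π_p(a)/φ_{v₀}(a) = Σ_{a'∈ZMod q} (π_d(a')/φ̃_{v₀}(a')) · ω^{a·a'}. -/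

import Mathlib

open scoped BigOperators

/-- The character value ω^{a·b} = exp(−2πi·a·b/q). -/
noncomputable def omegaPow (q : ℕ) (a b : ZMod q) : ℂ :=
  Complex.exp (-2 * Real.pi * Complex.I * ((a.val * b.val : ℕ) : ℂ) / (q : ℂ))

/-- The discrete Fourier transform of `f : ZMod q → ℂ`. -/
noncomputable def dft (q : ℕ) [NeZero q] (f : ZMod q → ℂ) (b : ZMod q) : ℂ :=
  ∑ a : ZMod q, f a * omegaPow q a b

/-- The dual vertex variable x̃_v(yt). -/
noncomputable def dualX {V E : Type*} [Fintype E] [DecidableEq V]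
    (s t : E → V) (q : ℕ) (yt : E → ZMod q) (v : V) : ZMod q :=
  -((∑ e ∈ Finset.univ.filter (fun e => s e = v), yt e) -
     ∑ e ∈ Finset.univ.filter (fun e => t e = v), yt e)

/-- The primal partition function. -/
noncomputable def Zp {V E : Type*} [Fintype V] [Fintype E] [DecidableEq V]
    (s t : E → V) (q : ℕ) [NeZero q]
    (ψ : E → ZMod q → ℂ) (φ : V → ZMod q → ℂ) : ℂ :=
  ∑ x : V → ZMod q, (∏ e : E, ψ e (x (s e) - x (t e))) * ∏ v : V, φ v (x v)

/-- The dual partition function. -/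
noncomputable def Zd {V E : Type*} [Fintype V] [Fintype E] [DecidableEq V] [DecidableEq E]
    (s t : E → V) (q : ℕ) [NeZero q]
    (ψ : E → ZMod q → ℂ) (φ : V → ZMod q → ℂ) : ℂ :=
  ∑ yt : E → ZMod q, (∏ e : E, dft q (ψ e) (yt e)) * ∏ v : V, dft q (φ v) (dualX s t q yt v)

noncomputable def chiN (q : ℕ) (m : ℕ) : ℂ :=
  Complex.exp (-2 * Real.pi * Complex.I * (m : ℂ) / (q : ℂ))

lemma chiN_add (q m n : ℕ) : chiN q (m + n) = chiN q m * chiN q n := by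
  rw [chiN, chiN, chiN, ← Complex.exp_add]
  congr 1
  push_cast
  ring

lemma chiN_q_mul (q : ℕ) [NeZero q] (k : ℕ) : chiN q (q * k) = 1 := by
  have hq : (q : ℂ) ≠ 0 := Nat.cast_ne_zero.mpr (NeZero.ne q)
  rw [chiN]
  have h : -2 * (Real.pi : ℂ) * Complex.I * ((q * k : ℕ) : ℂ) / (q : ℂ)
      = ((-(k : ℤ) : ℤ) : ℂ) * (2 * Real.pi * Complex.I) := by
    field_simp
    push_cast
    ring
  rw [h, Complex.exp_int_mul_two_pi_mul_I]

lemma chiN_mod (q : ℕ) [NeZero q] (m : ℕ) : chiN q (m % q) = chiN q m := by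
  conv_rhs => rw [← Nat.div_add_mod m q]
  rw [Nat.add_comm, chiN_add, chiN_q_mul, mul_one]

noncomputable def chi (q : ℕ) [NeZero q] (z : ZMod q) : ℂ := chiN q z.val

lemma chi_zero (q : ℕ) [NeZero q] : chi q 0 = 1 := by
  simp [chi, chiN]

lemma chi_add (q : ℕ) [NeZero q] (x y : ZMod q) : chi q (x + y) = chi q x * chi q y := by
  rw [chi, ZMod.val_add, chiN_mod, chiN_add]; rfl

lemma omegaPow_eq_chi (q : ℕ) [NeZero q] (a b : ZMod q) :
    omegaPow q a b = chi q (a * b) := by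
  rw [omegaPow, chi, ZMod.val_mul, chiN_mod]; rfl

lemma chi_sum (q : ℕ) [NeZero q] {ι : Type*} (S : Finset ι) (g : ι → ZMod q) :
    chi q (∑ i ∈ S, g i) = ∏ i ∈ S, chi q (g i) := by
  classical
  induction S using Finset.cons_induction with
  | empty => simp [chi_zero]
  | cons i S hi ih => rw [Finset.sum_cons, Finset.prod_cons, chi_add, ih]

lemma chi_nsmul (q : ℕ) [NeZero q] (n : ℕ) (d : ZMod q) : chi q (n • d) = chi q d ^ n := by
  induction n with
  | zero => simp [chi_zero]
  | succ n ih => rw [succ_nsmul, chi_add, ih, pow_succ]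

lemma chi_ne_one (q : ℕ) [NeZero q] {d : ZMod q} (hd : d ≠ 0) : chi q d ≠ 1 := by
  intro h
  rw [chi, chiN, Complex.exp_eq_one_iff] at h
  obtain ⟨n, hn⟩ := h
  have hq : (q : ℂ) ≠ 0 := Nat.cast_ne_zero.mpr (NeZero.ne q)
  have h2pi : (2 : ℂ) * Real.pi * Complex.I ≠ 0 := by
    norm_num [Real.pi_ne_zero, Complex.I_ne_zero]
  have h2 : (-(d.val : ℂ) / q) = (n : ℂ) := by
    apply mul_right_cancel₀ h2pi
    rw [← hn]; ring
  have hr : -(d.val : ℝ) / q = (n : ℝ) := by exact_mod_cast h2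
  have hdv : 0 < d.val := Nat.pos_of_ne_zero (fun h0 => hd ((ZMod.val_eq_zero d).mp h0))
  have hqd : d.val < q := ZMod.val_lt d
  have hq' : (0:ℝ) < q := by exact_mod_cast Nat.pos_of_ne_zero (NeZero.ne q)
  have h1 : (n : ℝ) < 0 := by
    rw [← hr]
    apply div_neg_of_neg_of_pos _ hq'
    simpa using (by exact_mod_cast hdv : (0:ℝ) < d.val)
  have h2' : (-1 : ℝ) < n := by
    rw [← hr, neg_div, neg_lt_neg_iff, div_lt_one hq']
    exact_mod_cast hqd
  have : (0:ℤ) ≤ n ∨ n ≤ -1 := by omega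
  rcases this with h | h
  · exact absurd h1 (not_lt.mpr (by exact_mod_cast h))
  · exact absurd h2' (not_lt.mpr (by exact_mod_cast h))

lemma chi_sum_mul (q : ℕ) [NeZero q] (d : ZMod q) :
    ∑ z : ZMod q, chi q (z * d) = if d = 0 then (q : ℂ) else 0 := by
  have key : ∀ z : ZMod q, chi q (z * d) = chi q d ^ z.val := by
    intro z
    rw [← chi_nsmul, nsmul_eq_mul, ZMod.natCast_val, ZMod.cast_id]
  simp_rw [key]
  have hsum : ∑ z : ZMod q, chi q d ^ z.val = ∑ k ∈ Finset.range q, chi q d ^ k := by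
    refine Finset.sum_nbij' (fun z => z.val) (fun k => (k : ZMod q)) ?_ ?_ ?_ ?_ ?_
    · intro z _; exact Finset.mem_range.mpr (ZMod.val_lt z)
    · intro k _; exact Finset.mem_univ _
    · intro z _; simp [ZMod.natCast_val, ZMod.cast_id]
    · intro k hk; exact ZMod.val_cast_of_lt (Finset.mem_range.mp hk)
    · intro z _; rfl
  rw [hsum]
  split_ifs with h
  · simp [h, chi_zero, Finset.card_range]
  · have hne := chi_ne_one q h
    rw [geom_sum_eq hne]
    have hpow : chi q d ^ q = 1 := by
      rw [← chi_nsmul]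
      have : (q : ℕ) • d = 0 := by
        simp [nsmul_eq_mul, ZMod.natCast_self]
      rw [this, chi_zero]
    rw [hpow, sub_self, zero_div]

section Duality

variable {V E : Type*} [Fintype V] [Fintype E] [DecidableEq V] [DecidableEq E]
variable (s t : E → V) (q : ℕ) [NeZero q]

lemma sum_c_dualX (c : V → ZMod q) (yt : E → ZMod q) :
    ∑ v : V, c v * dualX s t q yt v = ∑ e : E, (-(c (s e) - c (t e))) * yt e := by
  have hA : ∑ v : V, ∑ e ∈ Finset.univ.filter (fun e => s e = v), c v * yt e
      = ∑ e : E, c (s e) * yt e := by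
    rw [← Finset.sum_fiberwise Finset.univ s (fun e => c (s e) * yt e)]
    exact Finset.sum_congr rfl fun v _ => Finset.sum_congr rfl fun e he => by
      rw [(Finset.mem_filter.mp he).2]
  have hB : ∑ v : V, ∑ e ∈ Finset.univ.filter (fun e => t e = v), c v * yt e
      = ∑ e : E, c (t e) * yt e := by
    rw [← Finset.sum_fiberwise Finset.univ t (fun e => c (t e) * yt e)]
    exact Finset.sum_congr rfl fun v _ => Finset.sum_congr rfl fun e he => by
      rw [(Finset.mem_filter.mp he).2]
  calc ∑ v : V, c v * dualX s t q yt v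
      = ∑ v : V, ((∑ e ∈ Finset.univ.filter (fun e => t e = v), c v * yt e)
          - ∑ e ∈ Finset.univ.filter (fun e => s e = v), c v * yt e) := by
        refine Finset.sum_congr rfl fun v _ => ?_
        rw [dualX, ← Finset.mul_sum, ← Finset.mul_sum]; ring
    _ = (∑ v : V, ∑ e ∈ Finset.univ.filter (fun e => t e = v), c v * yt e)
          - ∑ v : V, ∑ e ∈ Finset.univ.filter (fun e => s e = v), c v * yt e := by
        rw [Finset.sum_sub_distrib]
    _ = (∑ e : E, c (t e) * yt e) - ∑ e : E, c (s e) * yt e := by rw [hA, hB]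
    _ = ∑ e : E, (-(c (s e) - c (t e))) * yt e := by
        rw [← Finset.sum_sub_distrib]
        exact Finset.sum_congr rfl fun e _ => by ring

lemma char_inner (b : E → ZMod q) (c : V → ZMod q) :
    ∑ yt : E → ZMod q, (∏ e : E, omegaPow q (b e) (yt e)) *
      ∏ v : V, omegaPow q (c v) (dualX s t q yt v)
    = ∏ e : E, (if b e = c (s e) - c (t e) then (q:ℂ) else 0) := by
  have step : ∀ yt : E → ZMod q,
      (∏ e : E, omegaPow q (b e) (yt e)) * ∏ v : V, omegaPow q (c v) (dualX s t q yt v)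
      = ∏ e : E, chi q ((b e - (c (s e) - c (t e))) * yt e) := by
    intro yt
    simp_rw [omegaPow_eq_chi]
    rw [← chi_sum, ← chi_sum, ← chi_add, sum_c_dualX s t q c yt, ← Finset.sum_add_distrib,
      ← chi_sum]
    congr 1
    exact Finset.sum_congr rfl fun e _ => by ring
  simp_rw [step]
  rw [← Fintype.piFinset_univ]
  have hps := Finset.prod_univ_sum (fun _ : E => (Finset.univ : Finset (ZMod q)))
    (fun e y => chi q ((b e - (c (s e) - c (t e))) * y))
  rw [← hps]
  refine Finset.prod_congr rfl fun e _ => ?_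
  have : ∀ y : ZMod q, chi q ((b e - (c (s e) - c (t e))) * y)
      = chi q (y * (b e - (c (s e) - c (t e)))) := fun y => by rw [mul_comm]
  simp_rw [this, chi_sum_mul, sub_eq_zero]

lemma master (ψ : E → ZMod q → ℂ) (h : V → ZMod q → ℂ) :
    Zd s t q ψ h = (q : ℂ) ^ (Fintype.card E) * Zp s t q ψ h := by
  have expand1 : ∀ yt : E → ZMod q, (∏ e : E, dft q (ψ e) (yt e))
      = ∑ b : E → ZMod q, ∏ e : E, (ψ e (b e) * omegaPow q (b e) (yt e)) := by
    intro yt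
    simp only [dft]
    rw [Finset.prod_univ_sum, Fintype.piFinset_univ]
  have expand2 : ∀ yt : E → ZMod q, (∏ v : V, dft q (h v) (dualX s t q yt v))
      = ∑ c : V → ZMod q, ∏ v : V, (h v (c v) * omegaPow q (c v) (dualX s t q yt v)) := by
    intro yt
    simp only [dft]
    rw [Finset.prod_univ_sum, Fintype.piFinset_univ]
  calc Zd s t q ψ h
      = ∑ yt : E → ZMod q, ∑ b : E → ZMod q, ∑ c : V → ZMod q,
          ((∏ e : E, ψ e (b e)) * ∏ v : V, h v (c v)) *
          ((∏ e : E, omegaPow q (b e) (yt e)) *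
            ∏ v : V, omegaPow q (c v) (dualX s t q yt v)) := by
        rw [Zd]
        refine Finset.sum_congr rfl fun yt _ => ?_
        rw [expand1 yt, expand2 yt, Finset.sum_mul_sum]
        refine Finset.sum_congr rfl fun b _ => Finset.sum_congr rfl fun c _ => ?_
        rw [Finset.prod_mul_distrib, Finset.prod_mul_distrib]
        ring
    _ = ∑ b : E → ZMod q, ∑ c : V → ZMod q,
          ((∏ e : E, ψ e (b e)) * ∏ v : V, h v (c v)) *
          ∑ yt : E → ZMod q, ((∏ e : E, omegaPow q (b e) (yt e)) *
            ∏ v : V, omegaPow q (c v) (dualX s t q yt v)) := by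
        rw [Finset.sum_comm]
        refine Finset.sum_congr rfl fun b _ => ?_
        rw [Finset.sum_comm]
        refine Finset.sum_congr rfl fun c _ => ?_
        rw [Finset.mul_sum]
    _ = ∑ c : V → ZMod q, ∑ b : E → ZMod q,
          ((∏ e : E, ψ e (b e)) * ∏ v : V, h v (c v)) *
          ∏ e : E, (if b e = c (s e) - c (t e) then (q:ℂ) else 0) := by
        rw [Finset.sum_comm]
        refine Finset.sum_congr rfl fun c _ => Finset.sum_congr rfl fun b _ => ?_
        rw [char_inner]
    _ = ∑ c : V → ZMod q, (∏ v : V, h v (c v)) *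
          ∑ b : E → ZMod q, ∏ e : E,
            (ψ e (b e) * if b e = c (s e) - c (t e) then (q:ℂ) else 0) := by
        refine Finset.sum_congr rfl fun c _ => ?_
        rw [Finset.mul_sum]
        refine Finset.sum_congr rfl fun b _ => ?_
        rw [Finset.prod_mul_distrib]
        ring
    _ = ∑ c : V → ZMod q, (∏ v : V, h v (c v)) *
          ∏ e : E, (ψ e (c (s e) - c (t e)) * (q:ℂ)) := by
        refine Finset.sum_congr rfl fun c _ => ?_
        congr 1
        rw [← Fintype.piFinset_univ]
        have hps := Finset.prod_univ_sum (fun _ : E => (Finset.univ : Finset (ZMod q)))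
          (fun e y => ψ e y * if y = c (s e) - c (t e) then (q:ℂ) else 0)
        rw [← hps]
        refine Finset.prod_congr rfl fun e _ => ?_
        simp_rw [mul_ite, mul_zero]
        rw [Finset.sum_ite_eq' Finset.univ (c (s e) - c (t e))
          (fun y => ψ e y * (q:ℂ))]
        simp
    _ = (q : ℂ) ^ (Fintype.card E) * Zp s t q ψ h := by
        rw [Zp, Finset.mul_sum]
        refine Finset.sum_congr rfl fun c _ => ?_
        rw [Finset.prod_mul_distrib, Finset.prod_const, Finset.card_univ]
        ring

end Duality

/-- Proposition 2: the primal and dual vertex marginals, each divided by the corresponding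
vertex factor, are discrete Fourier transform pairs. -/
theorem vertex_marginals_fourier_pair {V E : Type*} [Fintype V] [Fintype E]
    [DecidableEq V] [DecidableEq E]
    (s t : E → V) (q : ℕ) [NeZero q]
    (ψ : E → ZMod q → ℂ) (φ : V → ZMod q → ℂ) (v₀ : V)
    (hZp : Zp s t q ψ φ ≠ 0)
    (hφ : ∀ a : ZMod q, φ v₀ a ≠ 0) (hφd : ∀ a : ZMod q, dft q (φ v₀) a ≠ 0)
    (a : ZMod q) :
    ((∑ x ∈ Finset.univ.filter (fun x : V → ZMod q => x v₀ = a),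
        (∏ e : E, ψ e (x (s e) - x (t e))) * ∏ v : V, φ v (x v)) / Zp s t q ψ φ) / φ v₀ a =
      ∑ a' : ZMod q,
        (((∑ yt ∈ Finset.univ.filter (fun yt : E → ZMod q => dualX s t q yt v₀ = a'),
            (∏ e : E, dft q (ψ e) (yt e)) * ∏ v : V, dft q (φ v) (dualX s t q yt v)) /
              Zd s t q ψ φ) / dft q (φ v₀) a') * omegaPow q a a' := by
  classical
  set φ' : V → ZMod q → ℂ := Function.update φ v₀ (fun b => if b = a then 1 else 0) with hφ'
  have hv0 : φ' v₀ = fun b => if b = a then 1 else 0 := Function.update_self _ _ _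
  have hvne : ∀ v : V, v ≠ v₀ → φ' v = φ v := fun v hv => Function.update_of_ne hv _ _
  have hdftv0 : ∀ b : ZMod q, dft q (φ' v₀) b = omegaPow q a b := by
    intro b
    rw [hv0, dft]
    simp only [ite_mul, one_mul, zero_mul]
    rw [Finset.sum_ite_eq' Finset.univ a (fun c => omegaPow q c b)]
    simp
  have hsplitP : ∀ x : V → ZMod q, (∏ v : V, φ' v (x v))
      = (if x v₀ = a then 1 else 0) * ∏ v ∈ Finset.univ.erase v₀, φ v (x v) := by
    intro x
    rw [← Finset.mul_prod_erase Finset.univ _ (Finset.mem_univ v₀), hv0]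
    congr 1
    exact Finset.prod_congr rfl fun v hv => by rw [hvne v (Finset.ne_of_mem_erase hv)]
  have hZp' : Zp s t q ψ φ'
      = ∑ x ∈ Finset.univ.filter (fun x : V → ZMod q => x v₀ = a),
          (∏ e : E, ψ e (x (s e) - x (t e))) * ∏ v ∈ Finset.univ.erase v₀, φ v (x v) := by
    rw [Zp, Finset.sum_filter]
    refine Finset.sum_congr rfl fun x _ => ?_
    rw [hsplitP x]
    split_ifs with hx <;> ring
  have hNum : (∑ x ∈ Finset.univ.filter (fun x : V → ZMod q => x v₀ = a),
        (∏ e : E, ψ e (x (s e) - x (t e))) * ∏ v : V, φ v (x v))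
      = φ v₀ a * Zp s t q ψ φ' := by
    rw [hZp', Finset.mul_sum]
    refine Finset.sum_congr rfl fun x hx => ?_
    have hxa : x v₀ = a := by simpa using (Finset.mem_filter.mp hx).2
    rw [← Finset.mul_prod_erase Finset.univ (fun v => φ v (x v)) (Finset.mem_univ v₀)]
    rw [hxa]
    ring
  have hsplitD : ∀ yt : E → ZMod q, (∏ v : V, dft q (φ' v) (dualX s t q yt v))
      = omegaPow q a (dualX s t q yt v₀) *
        ∏ v ∈ Finset.univ.erase v₀, dft q (φ v) (dualX s t q yt v) := by
    intro yt
    rw [← Finset.mul_prod_erase Finset.univ _ (Finset.mem_univ v₀), hdftv0]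
    congr 1
    exact Finset.prod_congr rfl fun v hv => by rw [hvne v (Finset.ne_of_mem_erase hv)]
  have hZd' : Zd s t q ψ φ'
      = ∑ a' : ZMod q, (∑ yt ∈ Finset.univ.filter
            (fun yt : E → ZMod q => dualX s t q yt v₀ = a'),
          (∏ e : E, dft q (ψ e) (yt e)) *
            ∏ v ∈ Finset.univ.erase v₀, dft q (φ v) (dualX s t q yt v)) * omegaPow q a a' := by
    have hfib := Finset.sum_fiberwise Finset.univ
      (fun yt : E → ZMod q => dualX s t q yt v₀)
      (fun yt : E → ZMod q => ((∏ e : E, dft q (ψ e) (yt e)) *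
        ∏ v ∈ Finset.univ.erase v₀, dft q (φ v) (dualX s t q yt v)) *
          omegaPow q a (dualX s t q yt v₀))
    rw [Zd]
    calc ∑ yt : E → ZMod q, (∏ e : E, dft q (ψ e) (yt e)) *
            ∏ v : V, dft q (φ' v) (dualX s t q yt v)
        = ∑ yt : E → ZMod q, ((∏ e : E, dft q (ψ e) (yt e)) *
            ∏ v ∈ Finset.univ.erase v₀, dft q (φ v) (dualX s t q yt v)) *
              omegaPow q a (dualX s t q yt v₀) := by
          refine Finset.sum_congr rfl fun yt _ => ?_
          rw [hsplitD yt]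
          ring
      _ = ∑ a' : ZMod q, ∑ yt ∈ Finset.univ.filter
            (fun yt : E → ZMod q => dualX s t q yt v₀ = a'),
            ((∏ e : E, dft q (ψ e) (yt e)) *
              ∏ v ∈ Finset.univ.erase v₀, dft q (φ v) (dualX s t q yt v)) *
                omegaPow q a (dualX s t q yt v₀) := hfib.symm
      _ = _ := by
          refine Finset.sum_congr rfl fun a' _ => ?_
          rw [Finset.sum_mul]
          refine Finset.sum_congr rfl fun yt hyt => ?_
          have : dualX s t q yt v₀ = a' := by
            simpa using (Finset.mem_filter.mp hyt).2
          rw [this]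
  have hqE : ((q : ℂ)) ^ (Fintype.card E) ≠ 0 :=
    pow_ne_zero _ (Nat.cast_ne_zero.mpr (NeZero.ne q))
  have hZd0 : Zd s t q ψ φ ≠ 0 := by
    rw [master]
    exact mul_ne_zero hqE hZp
  have hDsplit : ∀ a' : ZMod q,
      (∑ yt ∈ Finset.univ.filter (fun yt : E → ZMod q => dualX s t q yt v₀ = a'),
          (∏ e : E, dft q (ψ e) (yt e)) * ∏ v : V, dft q (φ v) (dualX s t q yt v))
      = dft q (φ v₀) a' *
        ∑ yt ∈ Finset.univ.filter (fun yt : E → ZMod q => dualX s t q yt v₀ = a'),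
          (∏ e : E, dft q (ψ e) (yt e)) *
            ∏ v ∈ Finset.univ.erase v₀, dft q (φ v) (dualX s t q yt v) := by
    intro a'
    rw [Finset.mul_sum]
    refine Finset.sum_congr rfl fun yt hyt => ?_
    have hya : dualX s t q yt v₀ = a' := by
      simpa using (Finset.mem_filter.mp hyt).2
    rw [← Finset.mul_prod_erase Finset.univ
      (fun v => dft q (φ v) (dualX s t q yt v)) (Finset.mem_univ v₀)]
    rw [hya]
    ring
  have hRHS : (∑ a' : ZMod q,
        (((∑ yt ∈ Finset.univ.filter (fun yt : E → ZMod q => dualX s t q yt v₀ = a'),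
            (∏ e : E, dft q (ψ e) (yt e)) * ∏ v : V, dft q (φ v) (dualX s t q yt v)) /
              Zd s t q ψ φ) / dft q (φ v₀) a') * omegaPow q a a')
      = Zd s t q ψ φ' / Zd s t q ψ φ := by
    have hterm : ∀ a' : ZMod q,
        (((∑ yt ∈ Finset.univ.filter (fun yt : E → ZMod q => dualX s t q yt v₀ = a'),
            (∏ e : E, dft q (ψ e) (yt e)) * ∏ v : V, dft q (φ v) (dualX s t q yt v)) /
              Zd s t q ψ φ) / dft q (φ v₀) a') * omegaPow q a a'
        = ((∑ yt ∈ Finset.univ.filter (fun yt : E → ZMod q => dualX s t q yt v₀ = a'),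
            (∏ e : E, dft q (ψ e) (yt e)) *
              ∏ v ∈ Finset.univ.erase v₀, dft q (φ v) (dualX s t q yt v)) *
                omegaPow q a a') / Zd s t q ψ φ := by
      intro a'
      rw [hDsplit a', mul_div_assoc (dft q (φ v₀) a'),
        mul_div_cancel_left₀ _ (hφd a'), div_mul_eq_mul_div]
    simp_rw [hterm]
    rw [← Finset.sum_div, ← hZd']
  rw [hRHS, hNum, master s t q ψ φ', master s t q ψ φ]
  rw [div_div, mul_comm (Zp s t q ψ φ) (φ v₀ a), ← div_div,
    mul_div_cancel_left₀ _ (hφ a)]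
  rw [mul_div_mul_left _ _ hqE]
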